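/- Every c-toothed permutation in Sₙ is equivalent to the identity permutation idₙ = 12⋯n under the S_c-equivalence. -/

import Mathlib

/-- A single step of the `S_c`-equivalence: the letters of a contiguous subword of
length `c` whose values are `c` consecutive integers are rearranged arbitrarily;
everything else is unchanged. -/
def ScStep (c : ℕ) (w w' : List ℕ) : Prop :=
  ∃ i m : ℕ, i + c ≤ w.length ∧ w.length = w'.length ∧
    w.take i = w'.take i ∧ w.drop (i + c) = w'.drop (i + c) ∧
    ((w.drop i).take c).Perm (List.range' m c) ∧
    ((w'.drop i).take c).Perm (List.range' m c)

/-- The splitting points of `w ∈ Sₙ`. -/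
def Splits (n : ℕ) (w : List ℕ) : Set ℕ :=
  {k | k ≤ n ∧ (w.take k).toFinset = Finset.Icc 1 k}

/-- `w ∈ Sₙ` is `c`-toothed: every irreducible block has size `< c`, and some
consecutive run of irreducible blocks has sizes summing to exactly `c`. -/
def Toothed (c n : ℕ) (w : List ℕ) : Prop :=
  (∀ k ∈ Splits n w, k < n → ∃ k' ∈ Splits n w, k < k' ∧ k' ≤ k + (c - 1)) ∧
  (∃ a ∈ Splits n w, a + c ∈ Splits n w)

/- ### Auxiliary lemmas -/

lemma range'_split (s u v t : ℕ) (h : t = u + v) :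
    List.range' s t = List.range' s u ++ List.range' (s + u) v := by
  subst h
  rw [← List.range'_append, one_mul]

lemma perm_of_toFinset (l : List ℕ) (hl : l.Nodup) (k : ℕ)
    (h : l.toFinset = Finset.Icc 1 k) : l.Perm (List.range' 1 k) := by
  rw [← Multiset.coe_eq_coe]
  apply Multiset.Nodup.toFinset_inj (by exact hl) (by exact List.nodup_range')
  show l.toFinset = (List.range' 1 k).toFinset
  rw [h]
  ext x
  simp only [Finset.mem_Icc, List.mem_toFinset, List.mem_range'_1]
  omega

/-- Replacing a window (a permutation of `c` consecutive values) by any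
rearrangement is a single step. -/
lemma scstep_congr (c m : ℕ) (P X Y S : List ℕ)
    (hX : X.Perm (List.range' m c)) (hY : Y.Perm (List.range' m c)) :
    ScStep c (P ++ X ++ S) (P ++ Y ++ S) := by
  have hXl : X.length = c := by
    simpa using hX.length_eq
  have hYl : Y.length = c := by
    simpa using hY.length_eq
  refine ⟨P.length, m, ?_, ?_, ?_, ?_, ?_, ?_⟩
  · simp [hXl]
  · simp [hXl, hYl]
  · rw [List.append_assoc, List.append_assoc, List.take_left, List.take_left]
  · have h1 : P.length + c = (P ++ X).length := by simp [hXl]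
    rw [h1, List.drop_left]
    rw [show (P ++ X).length = (P ++ Y).length from by simp [hXl, hYl], List.drop_left]
  · rw [List.append_assoc, List.drop_left, ← hXl, List.take_left, hXl]
    exact hX
  · rw [List.append_assoc, List.drop_left, ← hYl, List.take_left, hYl]
    exact hY

/-- Absorbing a block of `b` consecutive values on the right of a sorted window. -/
lemma step_right (c b m : ℕ) (P B S : List ℕ) (hb : b ≤ c)
    (hB : B.Perm (List.range' (m + c) b)) :
    ScStep c (P ++ List.range' m c ++ B ++ S) (P ++ List.range' m (c + b) ++ S) := by
  have e0 : List.range' m c = List.range' m b ++ List.range' (m + b) (c - b) :=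
    range'_split m b (c - b) c (by omega)
  have e0' : List.range' (m + b) c
      = List.range' (m + b) (c - b) ++ List.range' (m + c) b := by
    rw [range'_split (m + b) (c - b) b c (by omega)]
    congr 2
    omega
  have e1 : List.range' m (c + b) = List.range' m b ++ List.range' (m + b) c :=
    range'_split m b c (c + b) (by omega)
  have hX : (List.range' (m + b) (c - b) ++ B).Perm (List.range' (m + b) c) := by
    rw [e0']
    exact hB.append_left _
  have key := scstep_congr c (m + b) (P ++ List.range' m b)
    (List.range' (m + b) (c - b) ++ B) (List.range' (m + b) c) S hX (List.Perm.refl _)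
  have eq1 : (P ++ List.range' m b) ++ (List.range' (m + b) (c - b) ++ B) ++ S
      = P ++ List.range' m c ++ B ++ S := by
    rw [e0]; simp only [List.append_assoc]
  have eq2 : (P ++ List.range' m b) ++ List.range' (m + b) c ++ S
      = P ++ List.range' m (c + b) ++ S := by
    rw [e1]; simp only [List.append_assoc]
  rwa [eq1, eq2] at key

/-- Absorbing a block of `b` consecutive values on the left of a sorted window. -/
lemma step_left (c b m : ℕ) (P B S : List ℕ) (hb : b ≤ c)
    (hB : B.Perm (List.range' m b)) :
    ScStep c (P ++ B ++ List.range' (m + b) c ++ S) (P ++ List.range' m (c + b) ++ S) := by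
  have e0 : List.range' (m + b) c
      = List.range' (m + b) (c - b) ++ List.range' (m + c) b := by
    rw [range'_split (m + b) (c - b) b c (by omega)]
    congr 2
    omega
  have e1 : List.range' m (c + b) = List.range' m c ++ List.range' (m + c) b :=
    range'_split m c b (c + b) (by omega)
  have e2 : List.range' m c = List.range' m b ++ List.range' (m + b) (c - b) :=
    range'_split m b (c - b) c (by omega)
  have hX : (B ++ List.range' (m + b) (c - b)).Perm (List.range' m c) := by
    rw [e2]
    exact hB.append_right _
  have key := scstep_congr c m P
    (B ++ List.range' (m + b) (c - b)) (List.range' m c)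
    (List.range' (m + c) b ++ S) hX (List.Perm.refl _)
  have eq1 : P ++ (B ++ List.range' (m + b) (c - b)) ++ (List.range' (m + c) b ++ S)
      = P ++ B ++ List.range' (m + b) c ++ S := by
    rw [e0]; simp only [List.append_assoc]
  have eq2 : P ++ List.range' m c ++ (List.range' (m + c) b ++ S)
      = P ++ List.range' m (c + b) ++ S := by
    rw [e1]; simp only [List.append_assoc]
  rwa [eq1, eq2] at key

/-- A segment of `w` between two splitting points is a permutation of the
corresponding consecutive values. -/
lemma seg_perm (n : ℕ) (w : List ℕ) (hw : w.Perm (List.range' 1 n))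
    (k k' : ℕ) (hk : k ∈ Splits n w) (hk' : k' ∈ Splits n w) (hkk : k ≤ k') :
    ((w.drop k).take (k' - k)).Perm (List.range' (k + 1) (k' - k)) := by
  obtain ⟨d, rfl⟩ : ∃ d, k' = k + d := ⟨k' - k, by omega⟩
  rw [show k + d - k = d from by omega]
  have hnd : w.Nodup := hw.nodup_iff.mpr List.nodup_range'
  have ht1 : (w.take k).Perm (List.range' 1 k) :=
    perm_of_toFinset _ (hnd.sublist (List.take_sublist _ _)) _ hk.2
  have ht2 : (w.take (k + d)).Perm (List.range' 1 (k + d)) :=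
    perm_of_toFinset _ (hnd.sublist (List.take_sublist _ _)) _ hk'.2
  have hsplit : w.take (k + d) = w.take k ++ (w.drop k).take d := List.take_add
  have hr : List.range' 1 (k + d) = List.range' 1 k ++ List.range' (k + 1) d := by
    rw [range'_split 1 k d (k + d) rfl]
    congr 2
    omega
  rw [hsplit, hr] at ht2
  have : (List.range' 1 k ++ (w.drop k).take d).Perm
      (List.range' 1 k ++ List.range' (k + 1) d) :=
    ((ht1.symm.append_right _).trans ht2)
  exact (List.perm_append_left_iff _).mp this

lemma range'_toFinset (k : ℕ) : (List.range' 1 k).toFinset = Finset.Icc 1 k := by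
  ext x
  simp only [Finset.mem_Icc, List.mem_toFinset, List.mem_range'_1]
  omega

/-- Every `c`-toothed permutation in `Sₙ` is equivalent to the identity permutation
`idₙ = 12⋯n` under the `S_c`-equivalence. -/
theorem stmt17 (n c : ℕ) (hc : 2 ≤ c) (hcn : c ≤ n)
    (w : List ℕ) (hw : w.Perm (List.range' 1 n))
    (ht : Toothed c n w) :
    Relation.EqvGen (ScStep c) w (List.range' 1 n) := by
  obtain ⟨hnext, a, ha, hac⟩ := ht
  have hlen : w.length = n := by simpa using hw.length_eq
  have hzero : (0 : ℕ) ∈ Splits n w := ⟨Nat.zero_le n, by simp⟩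
  have hacn : a + c ≤ n := hac.1
  -- previous split lemma
  have prev : ∀ j ∈ Splits n w, 0 < j →
      ∃ j'' ∈ Splits n w, j'' < j ∧ j ≤ j'' + (c - 1) := by
    intro j hj hj0
    have climb : ∀ d j'', j'' ∈ Splits n w → j'' < j → j ≤ j'' + d →
        ∃ j'' ∈ Splits n w, j'' < j ∧ j ≤ j'' + (c - 1) := by
      intro d
      induction d with
      | zero => intro j'' _ h2 h3; omega
      | succ d ih =>
        intro j'' h1 h2 h3
        by_cases hle : j ≤ j'' + (c - 1)
        · exact ⟨j'', h1, h2, hle⟩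
        · have hj''n : j'' < n := lt_of_lt_of_le h2 hj.1
          obtain ⟨k', hk', hlt, hub⟩ := hnext j'' h1 hj''n
          have hk'j : k' < j := by omega
          exact ih k' hk' hk'j (by omega)
    exact climb j 0 hzero hj0 (by omega)
  -- single rightward absorption step
  have advright : ∀ k k', k ∈ Splits n w → k' ∈ Splits n w →
      a + c ≤ k → k < k' → k' ≤ k + c →
      ScStep c (w.take a ++ List.range' (a + 1) (k - a) ++ w.drop k)
               (w.take a ++ List.range' (a + 1) (k' - a) ++ w.drop k') := by
    intro k k' hk hk' h1 h2 h3
    set b := k' - k with hb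
    have hB : ((w.drop k).take b).Perm (List.range' (k + 1) b) :=
      seg_perm n w hw k k' hk hk' (by omega)
    have key := step_right c b (k + 1 - c)
      (w.take a ++ List.range' (a + 1) (k - a - c)) ((w.drop k).take b)
      (w.drop k') (by omega)
      (by rw [show k + 1 - c + c = k + 1 from by omega]; exact hB)
    have edrop : w.drop k = (w.drop k).take b ++ w.drop k' := by
      conv_lhs => rw [← List.take_append_drop b (w.drop k)]
      rw [List.drop_drop, show k + b = k' from by omega]
    have er1 : List.range' (a + 1) (k - a)
        = List.range' (a + 1) (k - a - c) ++ List.range' (k + 1 - c) c := by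
      rw [range'_split (a + 1) (k - a - c) c (k - a) (by omega)]
      congr 2
      omega
    have er2 : List.range' (a + 1) (k' - a)
        = List.range' (a + 1) (k - a - c) ++ List.range' (k + 1 - c) (c + b) := by
      rw [range'_split (a + 1) (k - a - c) (c + b) (k' - a) (by omega)]
      congr 2
      omega
    have eq1 : w.take a ++ List.range' (a + 1) (k - a) ++ w.drop k
        = (w.take a ++ List.range' (a + 1) (k - a - c)) ++ List.range' (k + 1 - c) c
          ++ (w.drop k).take b ++ w.drop k' := by
      rw [er1]
      conv_lhs => rw [edrop]
      simp [List.append_assoc]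
    have eq2 : w.take a ++ List.range' (a + 1) (k' - a) ++ w.drop k'
        = (w.take a ++ List.range' (a + 1) (k - a - c)) ++ List.range' (k + 1 - c) (c + b)
          ++ w.drop k' := by
      rw [er2]
      simp [List.append_assoc]
    rw [eq1, eq2]
    exact key
  -- single leftward absorption step
  have advleft : ∀ j'' j, j'' ∈ Splits n w → j ∈ Splits n w →
      j'' < j → j ≤ j'' + c → j + c ≤ n →
      ScStep c (w.take j ++ List.range' (j + 1) (n - j))
               (w.take j'' ++ List.range' (j'' + 1) (n - j'')) := by
    intro j'' j hj'' hj h1 h2 h3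
    set b := j - j'' with hb
    have hB : ((w.drop j'').take b).Perm (List.range' (j'' + 1) b) :=
      seg_perm n w hw j'' j hj'' hj (by omega)
    have key := step_left c b (j'' + 1)
      (w.take j'') ((w.drop j'').take b)
      (List.range' (j + 1 + c) (n - j - c)) (by omega) hB
    have etake : w.take j = w.take j'' ++ (w.drop j'').take b := by
      rw [show j = j'' + b from by omega, List.take_add]
    have er1 : List.range' (j + 1) (n - j)
        = List.range' (j + 1) c ++ List.range' (j + 1 + c) (n - j - c) := by
      rw [range'_split (j + 1) c (n - j - c) (n - j) (by omega)]
    have er2 : List.range' (j'' + 1) (n - j'')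
        = List.range' (j'' + 1) (c + b) ++ List.range' (j + 1 + c) (n - j - c) := by
      rw [range'_split (j'' + 1) (c + b) (n - j - c) (n - j'') (by omega)]
      congr 2
      omega
    have eq1 : w.take j ++ List.range' (j + 1) (n - j)
        = w.take j'' ++ (w.drop j'').take b ++ List.range' (j'' + 1 + b) c
          ++ List.range' (j + 1 + c) (n - j - c) := by
      rw [etake, er1, show j'' + 1 + b = j + 1 from by omega]
      simp [List.append_assoc]
    have eq2 : w.take j'' ++ List.range' (j'' + 1) (n - j'')
        = w.take j'' ++ List.range' (j'' + 1) (c + b)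
          ++ List.range' (j + 1 + c) (n - j - c) := by
      rw [er2]
      simp [List.append_assoc]
    rw [eq1, eq2]
    exact key
  -- initial step: sort the free window
  have init : Relation.EqvGen (ScStep c) w
      (w.take a ++ List.range' (a + 1) (a + c - a) ++ w.drop (a + c)) := by
    have hwin : ((w.drop a).take c).Perm (List.range' (a + 1) c) := by
      have := seg_perm n w hw a (a + c) ha hac (by omega)
      simpa using this
    have ew : w = w.take a ++ (w.drop a).take c ++ w.drop (a + c) := by
      conv_lhs => rw [← List.take_append_drop a w]
      conv_lhs => rw [← List.take_append_drop c (w.drop a)]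
      rw [List.drop_drop]
      simp [List.append_assoc]
    rw [show a + c - a = c from by omega]
    apply Relation.EqvGen.rel
    conv_lhs => rw [ew]
    exact scstep_congr c (a + 1) (w.take a) _ _ (w.drop (a + c)) hwin (List.Perm.refl _)
  -- rightward phase
  have right : ∀ d k, k ∈ Splits n w → a + c ≤ k → n ≤ k + d →
      Relation.EqvGen (ScStep c) w
        (w.take a ++ List.range' (a + 1) (k - a) ++ w.drop k) →
      Relation.EqvGen (ScStep c) w
        (w.take a ++ List.range' (a + 1) (n - a) ++ w.drop n) := by
    intro d
    induction d with
    | zero =>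
      intro k hk h1 h2 h3
      have : k = n := le_antisymm hk.1 (by omega)
      subst this
      exact h3
    | succ d ih =>
      intro k hk h1 h2 h3
      by_cases hkn : k = n
      · subst hkn; exact h3
      · have hklt : k < n := lt_of_le_of_ne hk.1 hkn
        obtain ⟨k', hk', hlt, hub⟩ := hnext k hk hklt
        have hstep := advright k k' hk hk' h1 hlt (by omega)
        exact ih k' hk' (by omega) (by omega)
          (h3.trans _ _ _ (Relation.EqvGen.rel _ _ hstep))
  -- leftward phase
  have left : ∀ d j, j ∈ Splits n w → j ≤ a → j ≤ d →
      Relation.EqvGen (ScStep c) w (w.take j ++ List.range' (j + 1) (n - j)) →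
      Relation.EqvGen (ScStep c) w (List.range' 1 n) := by
    intro d
    induction d with
    | zero =>
      intro j hj h1 h2 h3
      have : j = 0 := by omega
      subst this
      simpa using h3
    | succ d ih =>
      intro j hj h1 h2 h3
      by_cases hj0 : j = 0
      · subst hj0; simpa using h3
      · obtain ⟨j'', hj'', hlt, hub⟩ := prev j hj (by omega)
        have hstep := advleft j'' j hj'' hj hlt (by omega) (by omega)
        exact ih j'' hj'' (by omega) (by omega)
          (h3.trans _ _ _ (Relation.EqvGen.rel _ _ hstep))
  have hR := right n (a + c) hac (le_refl _) (by omega) init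
  have hR' : Relation.EqvGen (ScStep c) w
      (w.take a ++ List.range' (a + 1) (n - a)) := by
    rw [show w.drop n = [] from List.drop_eq_nil_of_le (by omega), List.append_nil] at hR
    exact hR
  exact left a a ha (le_refl _) (le_refl _) hR'
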